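/- Let $q$ be a prime power, $F$ a finite field with $|F| = q$, and $n \geq 1$. Suppose we are given a family of permutations $(\sigma_k)_{k \in F}$ of $\mathrm{Fin}\,n$, indexed by the elements of $F$ (this encodes a proper $q$-edge-coloring of a $q$-regular bipartite multigraph: the edge of color $k$ at the $j$-th right vertex joins it to the left vertex $\sigma_k^{-1}(j)$, and the multigraph's biadjacency matrix is $M(i,j) = |\{k \in F : \sigma_k(i) = j\}|$). Let $\alpha : \mathrm{Fin}\,n \to F$, and define the polynomial $f \in F[x_1, \ldots, x_n]$ by $f = \prod_{j=1}^{n} \Big[ \Big( \sum_{k \in F} \big(1 - (x_{\sigma_k^{-1}(j)} - k)^{q-1}\big) \Big) - \alpha(j) \Big]$. Then the coefficient of the monomial $\prod_{i=1}^n x_i^{q-1}$ in $f$ equals $(-1)^n \cdot \mathrm{per}(M)$, where $\mathrm{per}(M) = \sum_{\sigma \in S_n} \prod_i M(i, \sigma(i))$ is the permanent of $M$ (the number of perfect matchings of the multigraph), cast from $\mathbb{N}$ into $F$. -/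

import Mathlib

open MvPolynomial Finset Function

lemma sum_single_eq_const (n d : ℕ) :
    (∑ i : Fin n, Finsupp.single i d) = Finsupp.equivFunOnFinite.symm (fun _ : Fin n => d) := by
  ext a
  rw [Finset.sum_apply']
  simp [Finsupp.single_apply]

lemma sum_single_iff_bij (n d : ℕ) (hd : d ≠ 0) (e : Fin n → Fin n) :
    (∑ j : Fin n, Finsupp.single (e j) d) = Finsupp.equivFunOnFinite.symm (fun _ : Fin n => d)
      ↔ Function.Bijective e := by
  constructor
  · intro h
    rw [Function.bijective_iff_existsUnique]
    intro i
    have hi := DFunLike.congr_fun h i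
    rw [Finset.sum_apply'] at hi
    simp only [Finsupp.single_apply, Finsupp.coe_equivFunOnFinite_symm] at hi
    rw [← Finset.sum_filter, Finset.sum_const, smul_eq_mul] at hi
    have hcard : (Finset.univ.filter fun x => e x = i).card = 1 := by
      have := Nat.eq_of_mul_eq_mul_right (Nat.pos_of_ne_zero hd)
        (hi.trans (one_mul d).symm)
      exact this
    obtain ⟨a, ha⟩ := Finset.card_eq_one.mp hcard
    refine ⟨a, ?_, ?_⟩
    · have : a ∈ Finset.univ.filter fun x => e x = i := ha ▸ Finset.mem_singleton_self a
      simpa using this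
    · intro b hb
      have : b ∈ Finset.univ.filter fun x => e x = i := by simpa using hb
      rw [ha] at this
      simpa using this
  · intro h
    rw [Fintype.sum_bijective e h _ (fun i => Finsupp.single i d) (fun j => rfl)]
    exact sum_single_eq_const n d

lemma deg_sub_pow_sub {R : Type*} [CommRing R] [Nontrivial R] {n : ℕ} (i : Fin n) (k : R) (d : ℕ) (hd : 1 ≤ d) :
    ((X i - C k) ^ d - X i ^ d : MvPolynomial (Fin n) R).totalDegree ≤ d - 1 := by
  rw [sub_pow, Finset.sum_range_succ]
  have hlast : ((-1 : MvPolynomial (Fin n) R) ^ (d + d) * X i ^ d * C k ^ (d - d) * (d.choose d : MvPolynomial (Fin n) R))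
      = X i ^ d := by
    simp [Even.neg_one_pow ⟨d, rfl⟩]
  rw [hlast, add_sub_cancel_right]
  refine (totalDegree_finset_sum _ _).trans (Finset.sup_le fun m hm => ?_)
  rw [Finset.mem_range] at hm
  have h1 : ((-1 : MvPolynomial (Fin n) R) ^ (m + d) * X i ^ m * C k ^ (d - m) * (d.choose m : MvPolynomial (Fin n) R))
      = C ((-1) ^ (m + d) * k ^ (d - m) * (d.choose m : R)) * X i ^ m := by
    rw [map_mul, map_mul, map_pow, map_pow, map_neg, map_one, C_eq_coe_nat]
    ring
  rw [h1]
  refine (totalDegree_mul _ _).trans ?_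
  simp only [totalDegree_C, zero_add]
  exact (totalDegree_X_pow i m).le.trans (by omega)

lemma count_bij (n : ℕ) (F : Type*) [Fintype F] [DecidableEq F] (σ : F → Equiv.Perm (Fin n))
    (M : Fin n → Fin n → ℕ)
    (hM : ∀ i j, M i j = (Finset.univ.filter fun k : F => σ k i = j).card) :
    (Finset.univ.filter fun g : Fin n → F =>
        Function.Bijective fun j => (σ (g j))⁻¹ j).card
      = ∑ τ : Equiv.Perm (Fin n), ∏ i, M i (τ i) := by
  have hsplit : (Finset.univ.filter fun g : Fin n → F =>
        Function.Bijective fun j => (σ (g j))⁻¹ j)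
      = Finset.univ.biUnion (fun τ : Equiv.Perm (Fin n) =>
          Finset.univ.filter fun g : Fin n → F => ∀ j, (σ (g j))⁻¹ j = τ j) := by
    ext g
    simp only [Finset.mem_filter, Finset.mem_univ, true_and, Finset.mem_biUnion]
    constructor
    · intro hbij
      exact ⟨Equiv.ofBijective _ hbij, fun j => rfl⟩
    · rintro ⟨τ, hτ⟩
      have : (fun j => (σ (g j))⁻¹ j) = ⇑τ := funext hτ
      rw [this]
      exact τ.bijective
  have hdisj : ∀ τ ∈ (Finset.univ : Finset (Equiv.Perm (Fin n))), ∀ τ' ∈ Finset.univ, τ ≠ τ' →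
      Disjoint (Finset.univ.filter fun g : Fin n → F => ∀ j, (σ (g j))⁻¹ j = τ j)
        (Finset.univ.filter fun g : Fin n → F => ∀ j, (σ (g j))⁻¹ j = τ' j) := by
    intro τ _ τ' _ hne
    rw [Finset.disjoint_left]
    intro g hg hg'
    simp only [Finset.mem_filter, Finset.mem_univ, true_and] at hg hg'
    exact hne (Equiv.ext fun j => (hg j).symm.trans (hg' j))
  rw [hsplit, Finset.card_biUnion hdisj]
  have hcard : ∀ τ : Equiv.Perm (Fin n),
      (Finset.univ.filter fun g : Fin n → F => ∀ j, (σ (g j))⁻¹ j = τ j).card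
        = ∏ j, M (τ j) j := by
    intro τ
    have hτset : (Finset.univ.filter fun g : Fin n → F => ∀ j, (σ (g j))⁻¹ j = τ j)
        = Fintype.piFinset fun j => Finset.univ.filter fun k : F => (σ k)⁻¹ j = τ j := by
      ext g
      simp [Fintype.mem_piFinset]
    rw [hτset, Fintype.card_piFinset]
    refine Finset.prod_congr rfl fun j _ => ?_
    rw [hM]
    congr 1
    ext k
    simp only [Finset.mem_filter, Finset.mem_univ, true_and, Equiv.Perm.inv_def]
    constructor
    · intro h; rw [← h]; exact Equiv.apply_symm_apply _ _
    · intro h; exact (Equiv.symm_apply_eq _).mpr h.symm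
  calc ∑ τ : Equiv.Perm (Fin n),
        (Finset.univ.filter fun g : Fin n → F => ∀ j, (σ (g j))⁻¹ j = τ j).card
      = ∑ τ : Equiv.Perm (Fin n), ∏ i, M i (τ⁻¹ i) := by
        refine Finset.sum_congr rfl fun τ _ => ?_
        rw [hcard τ, ← Equiv.prod_comp τ⁻¹ (fun j => M (τ j) j)]
        refine Finset.prod_congr rfl fun i _ => ?_
        rw [show τ (τ⁻¹ i) = i from τ.apply_symm_apply i]
    _ = ∑ τ : Equiv.Perm (Fin n), ∏ i, M i (τ i) :=
        Equiv.sum_comp (Equiv.inv (Equiv.Perm (Fin n))) (fun τ => ∏ i, M i (τ i))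

theorem coeff_of_antifactor_polynomial
    (q n : ℕ) (hq : IsPrimePow q) (hn : 1 ≤ n)
    (F : Type*) [Field F] [Fintype F] [DecidableEq F] (hcard : Fintype.card F = q)
    (σ : F → Equiv.Perm (Fin n))
    (M : Fin n → Fin n → ℕ)
    (hM : ∀ i j, M i j = (Finset.univ.filter fun k : F => σ k i = j).card)
    (α : Fin n → F)
    (f : MvPolynomial (Fin n) F)
    (hf : f = ∏ j : Fin n,
        ((∑ k : F, (1 - (X ((σ k)⁻¹ j) - C k) ^ (q - 1))) - C (α j))) :
    MvPolynomial.coeff (Finsupp.equivFunOnFinite.symm fun _ : Fin n => q - 1) f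
      = (-1) ^ n * ((∑ τ : Equiv.Perm (Fin n), ∏ i, M i (τ i) : ℕ) : F) := by
  classical
  have hq2 : 2 ≤ q := hq.two_le
  set d := q - 1 with hdq
  have hd : 1 ≤ d := by omega
  set t : Fin n →₀ ℕ := Finsupp.equivFunOnFinite.symm fun _ : Fin n => d with ht
  have htapp : ∀ i, t i = d := fun i => rfl
  have htsupp : t.support = Finset.univ := by
    apply Finset.eq_univ_iff_forall.mpr
    intro i
    rw [Finsupp.mem_support_iff, htapp]
    omega
  have htsum : ∑ i ∈ t.support, t i = n * d := by
    rw [htsupp]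
    simp only [htapp]
    rw [Finset.sum_const, Finset.card_univ, Fintype.card_fin, smul_eq_mul]
  set P : Fin n → MvPolynomial (Fin n) F := fun j => ∑ k : F, X ((σ k)⁻¹ j) ^ d with hP
  set A : Fin n → MvPolynomial (Fin n) F := fun j => -P j with hA
  set Bf : Fin n → MvPolynomial (Fin n) F :=
    fun j => ((∑ k : F, (1 - (X ((σ k)⁻¹ j) - C k) ^ d)) - C (α j)) - A j with hB
  have hf2 : f = ∏ j : Fin n, (A j + Bf j) := by
    rw [hf]
    exact Finset.prod_congr rfl fun j _ => by rw [hB]; ring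
  have hdegP : ∀ j, (P j).totalDegree ≤ d := fun j => by
    rw [hP]
    exact (totalDegree_finset_sum _ _).trans
      (Finset.sup_le fun k _ => (totalDegree_X_pow _ _).le)
  have hdegA : ∀ j, (A j).totalDegree ≤ d := fun j => by
    rw [hA, totalDegree_neg]; exact hdegP j
  have hdegB : ∀ j, (Bf j).totalDegree ≤ d - 1 := by
    intro j
    have hBeq : Bf j
        = (∑ k : F, ((1 - (X ((σ k)⁻¹ j) - C k) ^ d) + X ((σ k)⁻¹ j) ^ d)) - C (α j) := by
      simp only [hB, hA, hP]
      rw [Finset.sum_add_distrib]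
      ring
    rw [hBeq]
    refine (totalDegree_sub_C_le _ _).trans ?_
    refine (totalDegree_finset_sum _ _).trans (Finset.sup_le fun k _ => ?_)
    rw [sub_add]
    refine (totalDegree_sub _ _).trans ?_
    rw [totalDegree_one]
    exact max_le (by omega) (deg_sub_pow_sub _ _ d hd)
  have step1 : coeff t f = coeff t (∏ j, A j) := by
    rw [hf2, Finset.prod_add, coeff_sum]
    rw [Finset.sum_eq_single_of_mem Finset.univ (Finset.mem_powerset_self _)]
    · rw [Finset.sdiff_self, Finset.prod_empty, mul_one]
    · intro s hs hsne
      apply coeff_eq_zero_of_totalDegree_lt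
      rw [htsum]
      have hc : s.card < n := by
        have h1 : s.card ≤ n := by
          simpa using Finset.card_le_univ s
        rcases h1.lt_or_eq with h | h
        · exact h
        · exact absurd (Finset.eq_univ_of_card s (by simpa using h)) hsne
      calc ((∏ j ∈ s, A j) * ∏ j ∈ Finset.univ \ s, Bf j).totalDegree
          ≤ (∏ j ∈ s, A j).totalDegree + (∏ j ∈ Finset.univ \ s, Bf j).totalDegree :=
            totalDegree_mul _ _
        _ ≤ (∑ j ∈ s, d) + ∑ j ∈ Finset.univ \ s, (d - 1) := by
            refine add_le_add ?_ ?_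
            · exact (totalDegree_finset_prod _ _).trans
                (Finset.sum_le_sum fun j _ => hdegA j)
            · exact (totalDegree_finset_prod _ _).trans
                (Finset.sum_le_sum fun j _ => hdegB j)
        _ = s.card * d + (n - s.card) * (d - 1) := by
            rw [Finset.sum_const, Finset.sum_const, smul_eq_mul, smul_eq_mul,
              Finset.card_sdiff_of_subset (Finset.subset_univ s), Finset.card_univ, Fintype.card_fin]
        _ < n * d := by
            have h1 : (n - s.card) * (d - 1) < (n - s.card) * d :=
              mul_lt_mul_of_pos_left (by omega) (by omega)
            calc s.card * d + (n - s.card) * (d - 1)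
                < s.card * d + (n - s.card) * d := Nat.add_lt_add_left h1 _
              _ = n * d := by rw [← Nat.add_mul, Nat.add_sub_cancel' hc.le]
  have step2 : (∏ j, A j) = C ((-1 : F) ^ n) * ∏ j, P j := by
    have hC1 : (C (-1 : F) : MvPolynomial (Fin n) F) = -1 := by simp
    calc ∏ j, A j = ∏ j : Fin n, (C (-1 : F) * P j) :=
          Finset.prod_congr rfl fun j _ => by
            show -P j = _
            rw [hC1, neg_one_mul]
      _ = C (-1 : F) ^ n * ∏ j, P j := by
          rw [Finset.prod_mul_distrib, Finset.prod_const, Finset.card_univ, Fintype.card_fin]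
      _ = C ((-1 : F) ^ n) * ∏ j, P j := by rw [map_pow]
  have step3 : coeff t (∏ j, P j)
      = ((∑ τ : Equiv.Perm (Fin n), ∏ i, M i (τ i) : ℕ) : F) := by
    simp only [hP]
    rw [Finset.prod_univ_sum, coeff_sum]
    have hmon : ∀ g : Fin n → F,
        (∏ j, X ((σ (g j))⁻¹ j) ^ d : MvPolynomial (Fin n) F)
          = monomial (∑ j, Finsupp.single ((σ (g j))⁻¹ j) d) 1 := by
      intro g
      simp only [X_pow_eq_monomial]
      rw [monomial_sum_one]
    simp only [hmon, coeff_monomial, ht]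
    simp only [sum_single_iff_bij n d (by omega)]
    rw [Fintype.piFinset_univ, Finset.sum_boole]
    rw [count_bij n F σ M hM]
  rw [step1, step2, coeff_C_mul, step3]
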